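/- arXiv:math/9903050 — 2 statements merged into one kernel-verified Lean document; each statement's English description precedes it below -/
import Mathlib

section
/- Let r be an odd prime and let X be the positive real number √(r/2)·(1/sin(π/r)), i.e. X = √(r/2)/sin(π/r). Then X is an algebraic integer, and X lies in the 8r-th cyclotomic field ℚ(exp(2πi/(8r))) viewed inside ℂ; in other words, X belongs to ℤ[u], the ring of integers of ℚ(u), where u = exp(2πi/(8r)). -/
open Real Complex

private lemma abs_one_sub_exp (θ : ℝ) (h0 : 0 ≤ θ) (h1 : θ ≤ π) :
    ‖1 - Complex.exp ((2*θ : ℝ) * Complex.I)‖ = 2 * Real.sin θ := by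
  have hsin : 0 ≤ Real.sin θ := Real.sin_nonneg_of_nonneg_of_le_pi h0 h1
  have h : (1 : ℂ) - Complex.exp ((2*θ : ℝ) * Complex.I)
      = ((1 - Real.cos (2*θ) : ℝ) : ℂ) + ((-Real.sin (2*θ) : ℝ) : ℝ) * Complex.I := by
    rw [Complex.exp_mul_I, ← Complex.ofReal_cos, ← Complex.ofReal_sin]
    push_cast
    ring
  have hsq : (‖1 - Complex.exp ((2*θ : ℝ) * Complex.I)‖)^2 = (2 * Real.sin θ)^2 := by
    rw [Complex.sq_norm, h, Complex.normSq_add_mul_I]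
    nlinarith [Real.sin_sq_add_cos_sq θ, Real.sin_sq_add_cos_sq (2*θ), Real.cos_two_mul θ]
  nlinarith [norm_nonneg (1 - Complex.exp ((2*θ : ℝ) * Complex.I)), hsq]

private lemma sqrt_two_eq (r : ℕ) (hrpos : 0 < r) (u : ℂ)
    (hupow : ∀ n : ℕ, u ^ n = Complex.exp ((n:ℂ) * (2 * (π:ℝ) * Complex.I / (8 * r)))) :
    ((Real.sqrt 2 : ℝ) : ℂ) = u ^ r + u ^ (7*r) := by
  have hr0 : (r:ℂ) ≠ 0 := Nat.cast_ne_zero.mpr hrpos.ne'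
  rw [hupow, hupow]
  have h1 : (r:ℂ) * (2 * (π:ℝ) * Complex.I / (8 * r)) = ((π/4 : ℝ) : ℂ) * Complex.I := by
    push_cast; field_simp; ring
  have h7 : ((7*r : ℕ):ℂ) * (2 * (π:ℝ) * Complex.I / (8 * r))
      = ((-(π/4) : ℝ) : ℂ) * Complex.I + 2 * (π:ℝ) * Complex.I := by
    push_cast; field_simp; ring
  rw [h1, h7, Complex.exp_add, Complex.exp_two_pi_mul_I, mul_one,
    Complex.exp_mul_I, Complex.exp_mul_I, ← Complex.ofReal_cos, ← Complex.ofReal_sin,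
    ← Complex.ofReal_cos, ← Complex.ofReal_sin, Real.cos_neg, Real.sin_neg,
    Real.cos_pi_div_four, Real.sin_pi_div_four]
  push_cast
  ring

private lemma two_sin_eq (r : ℕ) (hrpos : 0 < r) (u : ℂ)
    (hupow : ∀ n : ℕ, u ^ n = Complex.exp ((n:ℂ) * (2 * (π:ℝ) * Complex.I / (8 * r))))
    (j : ℕ) (hj : j ≤ 2*r) :
    ((2 * Real.sin (j * π / r) : ℝ) : ℂ) = u ^ (6*r) * (u ^ (4*j) - u ^ (8*r - 4*j)) := by
  have hr0 : (r:ℂ) ≠ 0 := Nat.cast_ne_zero.mpr hrpos.ne'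
  have h6 : ((6*r : ℕ):ℂ) * (2 * (π:ℝ) * Complex.I / (8 * r))
      = (π:ℝ) * Complex.I + ((π/2 : ℝ):ℂ) * Complex.I := by push_cast; field_simp; ring
  have h4 : ((4*j : ℕ):ℂ) * (2 * (π:ℝ) * Complex.I / (8 * r))
      = ((j * π / r : ℝ) : ℂ) * Complex.I := by push_cast; field_simp; ring
  have h8 : ((8*r - 4*j : ℕ):ℂ) * (2 * (π:ℝ) * Complex.I / (8 * r))
      = ((-(j * π / r) : ℝ) : ℂ) * Complex.I + 2 * (π:ℝ) * Complex.I := by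
    have h48 : ((8*r - 4*j : ℕ):ℂ) = 8*r - 4*j := by
      have : 4*j ≤ 8*r := by omega
      push_cast [this]; ring
    rw [h48]; push_cast; field_simp; ring
  rw [hupow, hupow, hupow, h6, h4, h8, Complex.exp_add, Complex.exp_add,
    Complex.exp_pi_mul_I, Complex.exp_two_pi_mul_I, mul_one,
    Complex.exp_mul_I, Complex.exp_mul_I, Complex.exp_mul_I,
    ← Complex.ofReal_cos, ← Complex.ofReal_sin, ← Complex.ofReal_cos, ← Complex.ofReal_sin,
    ← Complex.ofReal_cos, ← Complex.ofReal_sin, Real.cos_neg, Real.sin_neg,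
    Real.cos_pi_div_two, Real.sin_pi_div_two]
  push_cast
  linear_combination (2 * Complex.sin ((j:ℂ) * (π:ℂ) / (r:ℂ))) * Complex.I_sq

/-- The element of `ℤ[u]` equal to `X`. -/
private lemma expr_mem {R : Type*} [CommRing R] [Algebra R ℂ] (u : ℂ) (m r : ℕ) :
    (u ^ r + u ^ (7*r)) *
      ∏ k ∈ Finset.range (m-1), (u ^ (6*r) * (u ^ (4*(k+2)) - u ^ (8*r - 4*(k+2))))
      ∈ Algebra.adjoin R ({u} : Set ℂ) := by
  have hu : u ∈ Algebra.adjoin R ({u} : Set ℂ) := Algebra.subset_adjoin rfl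
  exact mul_mem (add_mem (pow_mem hu _) (pow_mem hu _))
    (Subalgebra.prod_mem _ fun k _ =>
      mul_mem (pow_mem hu _) (sub_mem (pow_mem hu _) (pow_mem hu _)))

/-- Let `r` be an odd prime and `X = √(r/2) / sin(π/r)` (a positive real number).
Then `X` is an algebraic integer and, viewed in `ℂ`, it lies in `ℤ[u]`, the ring of
integers of the `8r`-th cyclotomic field `ℚ(u)` where `u = exp(2πi/(8r))`; in
particular `X` lies in the field `ℚ(u)` inside `ℂ`. -/
theorem X_is_algebraic_integer_in_cyclotomic
    (r : ℕ) (hr : Nat.Prime r) (hodd : Odd r)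
    (u : ℂ) (hu : u = Complex.exp (2 * Real.pi * Complex.I / (8 * r)))
    (X : ℝ) (hX : X = Real.sqrt (r / 2) * (1 / Real.sin (Real.pi / r))) :
    IsIntegral ℤ (X : ℂ)
    ∧ (X : ℂ) ∈ Algebra.adjoin ℤ ({u} : Set ℂ)
    ∧ (X : ℂ) ∈ Algebra.adjoin ℚ ({u} : Set ℂ) := by
  obtain ⟨m, hm⟩ := hodd
  have hrpos : 0 < r := hr.pos
  have hm1 : 1 ≤ m := by have := hr.two_le; omega
  have hrR : (0:ℝ) < r := by exact_mod_cast hrpos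
  have hupow : ∀ n : ℕ, u ^ n = Complex.exp ((n:ℂ) * (2 * (π:ℝ) * Complex.I / (8 * r))) := by
    intro n; rw [hu, ← Complex.exp_nat_mul]
  set f : ℕ → ℝ := fun j => 2 * Real.sin ((j:ℝ) * π / r) with hfdef
  have hsin_pos : ∀ j : ℕ, 1 ≤ j → j ≤ 2*m → 0 < Real.sin ((j:ℝ) * π / r) := by
    intro j h1 h2
    apply Real.sin_pos_of_pos_of_lt_pi
    · have : (1:ℝ) ≤ (j:ℝ) := by exact_mod_cast h1
      positivity
    · rw [div_lt_iff₀ hrR]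
      have : (j:ℝ) < r := by exact_mod_cast (by omega : j < r)
      nlinarith [Real.pi_pos]
  -- complex product identity for the r-th roots of unity
  have hζ : IsPrimitiveRoot (Complex.exp (2 * (π:ℝ) * Complex.I / r)) (2*m+1) := by
    rw [← hm]; exact Complex.isPrimitiveRoot_exp r hrpos.ne'
  have hprodC := hζ.prod_one_sub_pow_eq_order
  have habs : ∀ k ∈ Finset.range (2*m),
      ‖1 - (Complex.exp (2 * (π:ℝ) * Complex.I / r)) ^ (k+1)‖ = f (k+1) := by
    intro k hk
    rw [Finset.mem_range] at hk
    have hθ0 : (0:ℝ) ≤ ((k+1 : ℕ):ℝ) * π / r := by positivity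
    have hθ1 : ((k+1 : ℕ):ℝ) * π / r ≤ π := by
      rw [div_le_iff₀ hrR]
      have : ((k+1:ℕ):ℝ) ≤ r := by exact_mod_cast (by omega : k+1 ≤ r)
      nlinarith [Real.pi_pos]
    have hexp : (Complex.exp (2 * (π:ℝ) * Complex.I / r)) ^ (k+1)
        = Complex.exp ((2 * (((k+1:ℕ):ℝ) * π / r) : ℝ) * Complex.I) := by
      rw [← Complex.exp_nat_mul]
      congr 1
      have hr0 : (r:ℂ) ≠ 0 := Nat.cast_ne_zero.mpr hrpos.ne'
      push_cast
      field_simp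
    rw [hexp, abs_one_sub_exp (((k+1:ℕ):ℝ) * π / r) hθ0 hθ1]
  have hprodR : ∏ k ∈ Finset.range (2*m), f (k+1) = (r:ℝ) := by
    have h1 := congrArg (‖·‖) hprodC
    rw [norm_prod, Finset.prod_congr rfl habs] at h1
    have h2 : ((2*m : ℕ) + 1 : ℂ) = ((r:ℝ) : ℂ) := by push_cast [hm]; ring
    rw [h2, Complex.norm_real, Real.norm_eq_abs, abs_of_pos hrR] at h1
    exact h1
  set P : ℝ := ∏ k ∈ Finset.range m, f (k+1) with hPdef
  have hswap : ∏ k ∈ Finset.range m, f (m + k + 1) = P := by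
    rw [hPdef, ← Finset.prod_range_reflect (fun j => f (j+1)) m]
    apply Finset.prod_congr rfl
    intro k hk
    rw [Finset.mem_range] at hk
    have e1 : m - 1 - k + 1 = m - k := by omega
    simp only [e1, hfdef]
    have h1 : ((m + k + 1 : ℕ):ℝ) * π / r = π - ((m - k : ℕ):ℝ) * π / r := by
      have e2 : ((m - k : ℕ):ℝ) = (m:ℝ) - k := by
        rw [Nat.cast_sub hk.le]
      have e3 : ((r:ℝ)) = 2*(m:ℝ)+1 := by exact_mod_cast congrArg (Nat.cast : ℕ → ℝ) hm
      rw [e2]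
      field_simp [e3]
      push_cast
      linarith
    rw [h1, Real.sin_pi_sub]
  have hPP : P * P = (r:ℝ) := by
    rw [← hprodR, show 2*m = m + m from by omega, Finset.prod_range_add]
    rw [hswap]
  have hP_pos : 0 < P := by
    apply Finset.prod_pos
    intro k hk
    rw [Finset.mem_range] at hk
    have := hsin_pos (k+1) (by omega) (by omega)
    simp only [hfdef]
    linarith
  have hsqrtr : Real.sqrt r = P := by
    rw [← hPP, Real.sqrt_mul_self hP_pos.le]
  set Q : ℝ := ∏ k ∈ Finset.range (m-1), f (k+2) with hQdef
  have hPQ : P = Q * f 1 := by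
    rw [hPdef, show m = (m-1) + 1 from by omega, Finset.prod_range_succ']
  have hf1 : f 1 = 2 * Real.sin (π / r) := by
    simp only [hfdef]
    norm_num
  have hs : 0 < Real.sin (π / r) := by
    have := hsin_pos 1 le_rfl (by omega)
    rw [Nat.cast_one, one_mul] at this
    exact this
  have h2 : Real.sqrt 2 * Real.sqrt 2 = 2 := Real.mul_self_sqrt (by norm_num)
  have hs2 : Real.sqrt 2 ≠ 0 := by positivity
  have hhalf : Real.sqrt ((r:ℝ)/2) * Real.sqrt 2 = Real.sqrt r := by
    rw [← Real.sqrt_mul (by positivity)]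
    congr 1
    ring
  have hX2 : X = Real.sqrt 2 * Q := by
    have key : Real.sqrt ((r:ℝ)/2) = Real.sqrt 2 * Q * Real.sin (π / r) := by
      apply mul_right_cancel₀ hs2
      rw [hhalf, hsqrtr, hPQ, hf1]
      linear_combination (-(Q * Real.sin (π / r))) * h2
    rw [hX, key, mul_one_div, mul_div_assoc, div_self hs.ne', mul_one]
  have hXE : (X : ℂ) = (u ^ r + u ^ (7*r)) *
      ∏ k ∈ Finset.range (m-1), (u ^ (6*r) * (u ^ (4*(k+2)) - u ^ (8*r - 4*(k+2)))) := by
    rw [hX2, hQdef, Complex.ofReal_mul, ← sqrt_two_eq r hrpos u hupow, Complex.ofReal_prod]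
    congr 1
    apply Finset.prod_congr rfl
    intro k hk
    rw [Finset.mem_range] at hk
    simp only [hfdef]
    exact two_sin_eq r hrpos u hupow (k+2) (by omega)
  have hmemZ : (X : ℂ) ∈ Algebra.adjoin ℤ ({u} : Set ℂ) := by
    rw [hXE]; exact expr_mem u m r
  have hmemQ : (X : ℂ) ∈ Algebra.adjoin ℚ ({u} : Set ℂ) := by
    rw [hXE]; exact expr_mem u m r
  refine ⟨?_, hmemZ, hmemQ⟩
  have hu8r : u ^ (8*r) = 1 := by
    rw [hupow]
    have hr0 : (r:ℂ) ≠ 0 := Nat.cast_ne_zero.mpr hrpos.ne'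
    rw [show ((8*r : ℕ):ℂ) * (2 * (π:ℝ) * Complex.I / (8 * r)) = 2 * (π:ℝ) * Complex.I by
      push_cast; field_simp]
    exact Complex.exp_two_pi_mul_I
  have huint : IsIntegral ℤ u := by
    refine ⟨Polynomial.X ^ (8*r) - Polynomial.C 1, ?_, ?_⟩
    · exact Polynomial.monic_X_pow_sub_C 1 (by omega)
    · simp [Polynomial.eval₂_sub, hu8r]
  exact IsIntegral.of_mem_of_fg _ huint.fg_adjoin_singleton _ hmemZ
end

section
/- Let r be an odd prime, u a primitive 8r-th root of unity, A = u², and for an integer n ≥ 0 let [n] = (A^{2n} − A^{−2n})/(A² − A^{−2}) be the quantized integer and [n]! = ∏_{k=1}^{n} [k] the quantized factorial (with [0]! = 1). Let x, y, z be nonnegative integers with x + y + z ≤ r − 2, corresponding to the admissible triple (a, b, c) = (y+z, z+x, x+y) at level r. Then the element θ(a,b,c) = ([x+y+z+1]! · [x]! · [y]! · [z]!) / ([y+z]! · [z+x]! · [x+y]!) of the field ℚ(u) lies in the ring of integers ℤ[u] and is a unit of that ring. -/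
open Finset

private lemma q_eq {K : Type} [Field K] {r : ℕ} {u : K}
    (hr : 2 ≤ r) (hu : IsPrimitiveRoot u (8 * r)) {n : ℕ} (hn1 : 1 ≤ n) (hnr : n < r) :
    (u ^ (4*n) - (u ^ (4*n))⁻¹) / (u ^ 4 - (u ^ 4)⁻¹)
      = u ^ (8*r + 4 - 4*n) * ∑ i ∈ range n, u ^ (8*i) := by
  have hu0 : u ≠ 0 := hu.ne_zero (by positivity)
  have h8r : u ^ (8*r) = 1 := hu.pow_eq_one
  have h8 : u ^ 8 ≠ 1 := hu.pow_ne_one_of_pos_of_lt (by norm_num) (by omega)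
  have h4 : (u:K) ^ 4 ≠ 0 := pow_ne_zero _ hu0
  have hden : u ^ 4 - (u ^ 4)⁻¹ ≠ 0 := by
    intro h
    apply h8
    have h' : u ^ 4 = (u ^ 4)⁻¹ := sub_eq_zero.mp h
    calc u ^ 8 = u ^ 4 * u ^ 4 := by ring
    _ = u ^ 4 * (u ^ 4)⁻¹ := by rw [← h']
    _ = 1 := mul_inv_cancel₀ h4
  rw [div_eq_iff hden]
  apply mul_right_cancel₀ (pow_ne_zero (4*n) hu0)
  have hgeom : (∑ i ∈ range n, u ^ (8*i)) * (u ^ 8 - 1) = u ^ (8*n) - 1 := by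
    have := geom_sum_mul (u ^ 8) n
    simpa [← pow_mul] using this
  have he : 8*r + 4 - 4*n + 4*n = 8*r + 4 := by omega
  have hE : u ^ (8*r + 4 - 4*n) * u ^ (4*n) = u ^ 4 := by
    rw [← pow_add, he, pow_add, h8r, one_mul]
  have hL : (u ^ (4*n) - (u ^ (4*n))⁻¹) * u ^ (4*n) = u ^ (8*n) - 1 := by
    rw [sub_mul, inv_mul_cancel₀ (pow_ne_zero _ hu0), ← pow_add]
    ring_nf
  rw [hL]
  symm
  calc u ^ (8*r + 4 - 4*n) * (∑ i ∈ range n, u ^ (8*i)) * (u ^ 4 - (u ^ 4)⁻¹) * u ^ (4*n)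
      = (∑ i ∈ range n, u ^ (8*i)) * ((u ^ (8*r + 4 - 4*n) * u ^ (4*n)) * u ^ 4
          - (u ^ (8*r + 4 - 4*n) * u ^ (4*n)) * (u ^ 4)⁻¹) := by ring
    _ = (∑ i ∈ range n, u ^ (8*i)) * (u ^ 8 - 1) := by
          rw [hE, mul_inv_cancel₀ h4, ← pow_add]
    _ = u ^ (8*n) - 1 := hgeom

private lemma S_unit {K : Type} [Field K] {r : ℕ} {u : K}
    (hr : Nat.Prime r) (hu : IsPrimitiveRoot u (8 * r)) {n : ℕ} (hn1 : 1 ≤ n) (hnr : n < r) :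
    ∃ T ∈ Algebra.adjoin ℤ ({u} : Set K),
      (∑ i ∈ range n, u ^ (8*i)) * T = 1 := by
  have hu0 : u ≠ 0 := hu.ne_zero (by have := hr.two_le; positivity)
  have h8r : u ^ (8*r) = 1 := hu.pow_eq_one
  have h8 : u ^ 8 ≠ 1 := hu.pow_ne_one_of_pos_of_lt (by norm_num) (by have := hr.two_le; omega)
  have h8n : u ^ (8*n) ≠ 1 := hu.pow_ne_one_of_pos_of_lt (by omega) (by omega)
  obtain ⟨m, hmod⟩ : ∃ m, n * m % r = 1 := by
    refine (fun ⟨m, _, hm⟩ => ⟨m, hm⟩) (Nat.exists_mul_mod_eq_one_of_coprime (n := n) ?_ hr.two_le)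
    exact Nat.Coprime.symm ((Nat.Prime.coprime_iff_not_dvd hr).mpr
      (fun h => absurd (Nat.le_of_dvd (by omega) h) (by omega)))
  obtain ⟨k, hk⟩ : ∃ k, n * m = r * k + 1 := by
    have := Nat.div_add_mod (n * m) r
    exact ⟨(n * m) / r, by omega⟩
  refine ⟨∑ i ∈ range m, (u ^ (8*n)) ^ i, ?_, ?_⟩
  · apply Subalgebra.sum_mem
    intro i _
    apply Subalgebra.pow_mem
    apply Subalgebra.pow_mem
    exact Algebra.subset_adjoin rfl
  · have hgeomS : (∑ i ∈ range n, u ^ (8*i)) * (u ^ 8 - 1) = u ^ (8*n) - 1 := by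
      have := geom_sum_mul (u ^ 8) n
      simpa [← pow_mul] using this
    have hgeomT : (∑ i ∈ range m, (u ^ (8*n)) ^ i) * (u ^ (8*n) - 1) = u ^ 8 - 1 := by
      have := geom_sum_mul (u ^ (8*n)) m
      rw [this, ← pow_mul]
      congr 1
      have h2 : 8 * n * m = 8 * r * k + 8 := by rw [mul_assoc, hk]; ring
      rw [h2, pow_add, pow_mul, h8r, one_pow, one_mul]
    apply mul_right_cancel₀ (sub_ne_zero.mpr h8)
    apply mul_right_cancel₀ (sub_ne_zero.mpr h8n)
    calc (∑ i ∈ range n, u ^ (8*i)) * (∑ i ∈ range m, (u ^ (8*n)) ^ i)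
          * (u ^ 8 - 1) * (u ^ (8*n) - 1)
        = ((∑ i ∈ range n, u ^ (8*i)) * (u ^ 8 - 1))
          * ((∑ i ∈ range m, (u ^ (8*n)) ^ i) * (u ^ (8*n) - 1)) := by ring
      _ = (u ^ (8*n) - 1) * (u ^ 8 - 1) := by rw [hgeomS, hgeomT]
      _ = 1 * (u ^ 8 - 1) * (u ^ (8*n) - 1) := by ring

/-- The predicate: an element of `K` that lies in `ℤ[u]` together with an inverse in `ℤ[u]`. -/
private def IsAU {K : Type} [CommRing K] (u v : K) : Prop :=
  v ∈ Algebra.adjoin ℤ ({u} : Set K) ∧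
    ∃ w ∈ Algebra.adjoin ℤ ({u} : Set K), v * w = 1

private lemma IsAU.one {K : Type} [CommRing K] (u : K) : IsAU u 1 :=
  ⟨Subalgebra.one_mem _, 1, Subalgebra.one_mem _, mul_one 1⟩

private lemma IsAU.mul {K : Type} [CommRing K] {u v1 v2 : K}
    (h1 : IsAU u v1) (h2 : IsAU u v2) : IsAU u (v1 * v2) := by
  obtain ⟨m1, w1, hw1, hv1⟩ := h1
  obtain ⟨m2, w2, hw2, hv2⟩ := h2
  refine ⟨Subalgebra.mul_mem _ m1 m2, w1 * w2, Subalgebra.mul_mem _ hw1 hw2, ?_⟩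
  calc v1 * v2 * (w1 * w2) = (v1 * w1) * (v2 * w2) := by ring
    _ = 1 := by rw [hv1, hv2, mul_one]

private lemma IsAU.prod {K : Type} [CommRing K] {u : K} {ι : Type} (s : Finset ι)
    (f : ι → K) (h : ∀ i ∈ s, IsAU u (f i)) : IsAU u (∏ i ∈ s, f i) :=
  Finset.prod_induction f _ (fun _ _ => IsAU.mul) (IsAU.one u) h

/-- Let `r` be an odd prime, `u` a primitive `8r`-th root of unity, `A = u ^ 2`,
`[n] = (A^(2n) - A^(-2n)) / (A^2 - A^(-2))` the quantized integer and
`[n]! = ∏_{k=1}^n [k]` the quantized factorial.  For nonnegative integers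
`x, y, z` with `x + y + z ≤ r - 2` (corresponding to the admissible triple
`(a,b,c) = (y+z, z+x, x+y)` at level `r`), the Kauffman theta coefficient
`θ(a,b,c) = ([x+y+z+1]! [x]! [y]! [z]!) / ([y+z]! [z+x]! [x+y]!)` lies in `ℤ[u]`,
the ring of integers of the cyclotomic field `ℚ(u)`, and is a unit of that ring. -/
theorem theta_mem_and_unit
    (r : ℕ) (hr : Nat.Prime r) (hodd : Odd r)
    (K : Type) [Field K] [CharZero K] (u : K)
    (hu : IsPrimitiveRoot u (8 * r))
    (A : K) (hA : A = u ^ 2)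
    (q : ℕ → K)
    (hq : ∀ n : ℕ, q n =
      (A ^ (2 * (n : ℤ)) - A ^ (-(2 * (n : ℤ)))) / (A ^ (2 : ℤ) - A ^ (-2 : ℤ)))
    (qfact : ℕ → K)
    (hqfact : ∀ n : ℕ, qfact n = ∏ k ∈ Finset.range n, q (k + 1))
    (x y z : ℕ) (hxyz : x + y + z ≤ r - 2)
    (θ : K)
    (hθ : θ = (qfact (x + y + z + 1) * qfact x * qfact y * qfact z) /
              (qfact (y + z) * qfact (z + x) * qfact (x + y))) :
    θ ∈ Algebra.adjoin ℤ ({u} : Set K)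
    ∧ ∃ w ∈ Algebra.adjoin ℤ ({u} : Set K), θ * w = 1 := by
  have hr3 : 3 ≤ r := by
    have h2 := hr.two_le
    rcases Nat.odd_iff.mp hodd with h
    omega
  have hu0 : u ≠ 0 := hu.ne_zero (by positivity)
  have h8r : u ^ (8*r) = 1 := hu.pow_eq_one
  -- rewrite q in terms of natural powers of u
  have hAz : ∀ k : ℕ, A ^ (2*(k:ℤ)) = u ^ (4*k) := by
    intro k
    rw [hA, show (2*(k:ℤ)) = ((2*k : ℕ) : ℤ) by push_cast; ring, zpow_natCast, ← pow_mul]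
    congr 1
    ring
  have hAzn : ∀ k : ℕ, A ^ (-(2*(k:ℤ))) = (u ^ (4*k))⁻¹ := by
    intro k
    rw [zpow_neg, hAz]
  have hq' : ∀ n : ℕ, q n = (u ^ (4*n) - (u ^ (4*n))⁻¹) / (u ^ 4 - (u ^ 4)⁻¹) := by
    intro n
    rw [hq, hAz, hAzn]
    congr 1
    have h1 : A ^ (2:ℤ) = u ^ 4 := by simpa using hAz 1
    rw [zpow_neg, h1]
  -- each quantized integer in the relevant range is a unit of ℤ[u]
  have hqu : ∀ n : ℕ, 1 ≤ n → n < r → IsAU u (q n) := by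
    intro n hn1 hnr
    have heq : q n = u ^ (8*r + 4 - 4*n) * ∑ i ∈ range n, u ^ (8*i) := by
      rw [hq', q_eq hr.two_le hu hn1 hnr]
    obtain ⟨T, hT, hST⟩ := S_unit hr hu hn1 hnr
    constructor
    · rw [heq]
      apply Subalgebra.mul_mem
      · apply Subalgebra.pow_mem
        exact Algebra.subset_adjoin rfl
      · apply Subalgebra.sum_mem
        intro i _
        apply Subalgebra.pow_mem
        exact Algebra.subset_adjoin rfl
    · refine ⟨u ^ (8*r + 4*n - 4) * T, ?_, ?_⟩
      · apply Subalgebra.mul_mem _ _ hT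
        apply Subalgebra.pow_mem
        exact Algebra.subset_adjoin rfl
      · rw [heq]
        calc u ^ (8*r + 4 - 4*n) * (∑ i ∈ range n, u ^ (8*i)) * (u ^ (8*r + 4*n - 4) * T)
            = (u ^ (8*r + 4 - 4*n) * u ^ (8*r + 4*n - 4)) *
                ((∑ i ∈ range n, u ^ (8*i)) * T) := by ring
          _ = 1 := by
              rw [hST, ← pow_add, show 8*r + 4 - 4*n + (8*r + 4*n - 4) = 8*r*2 by omega,
                pow_mul, h8r, one_pow, mul_one]
  -- quantized factorials in the relevant range are units of ℤ[u]
  have hqf : ∀ n : ℕ, n < r → IsAU u (qfact n) := by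
    intro n hn
    rw [hqfact]
    apply IsAU.prod
    intro k hk
    rw [Finset.mem_range] at hk
    exact hqu (k+1) (by omega) (by omega)
  -- assemble
  have hN : IsAU u (qfact (x + y + z + 1) * qfact x * qfact y * qfact z) :=
    (((hqf _ (by omega)).mul (hqf _ (by omega))).mul (hqf _ (by omega))).mul
      (hqf _ (by omega))
  have hD : IsAU u (qfact (y + z) * qfact (z + x) * qfact (x + y)) :=
    ((hqf _ (by omega)).mul (hqf _ (by omega))).mul (hqf _ (by omega))
  obtain ⟨hNmem, wN, hwN, hwNeq⟩ := hN
  obtain ⟨hDmem, wD, hwD, hwDeq⟩ := hD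
  have hD0 : qfact (y + z) * qfact (z + x) * qfact (x + y) ≠ 0 := by
    intro h
    rw [h, zero_mul] at hwDeq
    exact zero_ne_one hwDeq
  have hθ' : θ = (qfact (x + y + z + 1) * qfact x * qfact y * qfact z) * wD := by
    rw [hθ, div_eq_iff hD0]
    have h : qfact (x + y + z + 1) * qfact x * qfact y * qfact z * wD *
        (qfact (y + z) * qfact (z + x) * qfact (x + y)) =
        qfact (x + y + z + 1) * qfact x * qfact y * qfact z *
        (qfact (y + z) * qfact (z + x) * qfact (x + y) * wD) := by ring
    rw [h, hwDeq, mul_one]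
  constructor
  · rw [hθ']
    exact Subalgebra.mul_mem _ hNmem hwD
  · refine ⟨(qfact (y + z) * qfact (z + x) * qfact (x + y)) * wN,
      Subalgebra.mul_mem _ hDmem hwN, ?_⟩
    rw [hθ']
    calc (qfact (x + y + z + 1) * qfact x * qfact y * qfact z) * wD *
          ((qfact (y + z) * qfact (z + x) * qfact (x + y)) * wN)
        = ((qfact (x + y + z + 1) * qfact x * qfact y * qfact z) * wN) *
          ((qfact (y + z) * qfact (z + x) * qfact (x + y)) * wD) := by ring
      _ = 1 := by rw [hwNeq, hwDeq, mul_one]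
end
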